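/- arXiv:1205.0903 — 4 statements merged into one kernel-verified Lean document; each statement's English description precedes it below -/
import Mathlib

section
/- Let m ≥ 1 be a natural number and let z be a real number with 1 ≤ z ≤ 2^m. Then |P_m(z)| ≤ (1/2)·|P_m(−z)|, where P_m is evaluated at real arguments via the canonical map ℤ[X] → ℝ[X]. -/
open Polynomial

/-- The polynomial `P_m(X) = (X - 1) * ∏_{i=1}^m (X - 2^i)^2` over `ℤ`. -/
noncomputable def Pm (m : ℕ) : Polynomial ℤ :=
  (X - 1) * ∏ i ∈ Finset.Icc 1 m, (X - C ((2 : ℤ) ^ i)) ^ 2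

theorem abs_Pm_le_half_abs_Pm_neg (m : ℕ) (hm : 1 ≤ m) (z : ℝ)
    (hz1 : 1 ≤ z) (hz2 : z ≤ 2 ^ m) :
    |Polynomial.aeval z (Pm m)| ≤ (1 / 2) * |Polynomial.aeval (-z) (Pm m)| := by
  classical
  have hz0 : (0:ℝ) < z := lt_of_lt_of_le one_pos hz1
  have hev : ∀ w : ℝ, Polynomial.aeval w (Pm m)
      = (w - 1) * ∏ i ∈ Finset.Icc 1 m, (w - 2 ^ i) ^ 2 := by
    intro w
    simp only [Pm, map_mul, map_prod, map_pow, map_sub, aeval_X, aeval_C, map_one, map_ofNat]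
  -- find k with 2^(k-1) ≤ z ≤ 2^k, 1 ≤ k ≤ m
  have hex : ∃ n : ℕ, z ≤ 2 ^ n := ⟨m, hz2⟩
  set k0 := Nat.find hex with hk0def
  have hk0m : k0 ≤ m := Nat.find_le hz2
  set k := max k0 1 with hkdef
  have hk1 : 1 ≤ k := le_max_right _ _
  have hkm : k ≤ m := max_le hk0m hm
  have hupp : z ≤ 2 ^ k := by
    calc z ≤ 2 ^ k0 := Nat.find_spec hex
    _ ≤ 2 ^ k := by
        apply pow_le_pow_right₀ (by norm_num : (1:ℝ) ≤ 2) (le_max_left _ _)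
  have hlow : (2:ℝ) ^ (k - 1) ≤ z := by
    rcases Nat.eq_zero_or_pos k0 with h0 | hpos
    · have : k = 1 := by simp [hkdef, h0]
      rw [this]
      simpa using hz1
    · have hkk : k = k0 := max_eq_left hpos
      have : ¬ z ≤ 2 ^ (k0 - 1) := Nat.find_min hex (Nat.sub_lt hpos one_pos)
      rw [hkk]
      linarith [not_le.mp this]
  have hkmem : k ∈ Finset.Icc 1 m := Finset.mem_Icc.mpr ⟨hk1, hkm⟩
  have h2k : (2:ℝ) ^ k = 2 * 2 ^ (k - 1) := by
    conv_lhs => rw [← Nat.sub_add_cancel hk1]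
    rw [pow_succ]
    ring
  -- key square inequality at k
  have hsq : (z - 2 ^ k) ^ 2 ≤ (1/9) * (z + 2 ^ k) ^ 2 := by
    nlinarith [hlow, hupp, h2k]
  -- split products
  have hsplitA : ∏ i ∈ Finset.Icc 1 m, (z - 2 ^ i) ^ 2
      = (z - 2 ^ k) ^ 2 * ∏ i ∈ (Finset.Icc 1 m).erase k, (z - 2 ^ i) ^ 2 :=
    (Finset.mul_prod_erase _ _ hkmem).symm
  have hsplitB : ∏ i ∈ Finset.Icc 1 m, (z + 2 ^ i) ^ 2
      = (z + 2 ^ k) ^ 2 * ∏ i ∈ (Finset.Icc 1 m).erase k, (z + 2 ^ i) ^ 2 :=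
    (Finset.mul_prod_erase _ _ hkmem).symm
  set A' := ∏ i ∈ (Finset.Icc 1 m).erase k, (z - 2 ^ i) ^ 2 with hA'
  set B' := ∏ i ∈ (Finset.Icc 1 m).erase k, (z + 2 ^ i) ^ 2 with hB'
  have hA'nonneg : 0 ≤ A' := Finset.prod_nonneg fun i _ => sq_nonneg _
  have hB'nonneg : 0 ≤ B' := Finset.prod_nonneg fun i _ => sq_nonneg _
  have hAB : A' ≤ B' := by
    apply Finset.prod_le_prod (fun i _ => sq_nonneg _)
    intro i _
    have h2i : (0:ℝ) < 2 ^ i := by positivity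
    nlinarith
  -- rewrite goal
  rw [hev z, hev (-z)]
  have habs1 : |(z - 1) * ∏ i ∈ Finset.Icc 1 m, (z - 2 ^ i) ^ 2|
      = (z - 1) * ∏ i ∈ Finset.Icc 1 m, (z - 2 ^ i) ^ 2 := by
    apply abs_of_nonneg
    apply mul_nonneg (by linarith) (Finset.prod_nonneg fun i _ => sq_nonneg _)
  have hprodneg : ∏ i ∈ Finset.Icc 1 m, (-z - 2 ^ i) ^ 2
      = ∏ i ∈ Finset.Icc 1 m, (z + 2 ^ i) ^ 2 := by
    apply Finset.prod_congr rfl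
    intro i _
    ring
  have habs2 : |(-z - 1) * ∏ i ∈ Finset.Icc 1 m, (-z - 2 ^ i) ^ 2|
      = (z + 1) * ∏ i ∈ Finset.Icc 1 m, (z + 2 ^ i) ^ 2 := by
    rw [hprodneg, abs_mul, abs_of_nonpos (by linarith : -z - 1 ≤ 0),
      abs_of_nonneg (Finset.prod_nonneg fun i _ => sq_nonneg _)]
    ring_nf
  rw [habs1, habs2, hsplitA, hsplitB]
  have h2kpos : (0:ℝ) < 2 ^ k := by positivity
  have step1 : (z - 1) * ((z - 2 ^ k) ^ 2 * A')
      ≤ (z + 1) * ((1/9) * (z + 2 ^ k) ^ 2 * B') := by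
    apply mul_le_mul (by linarith) ?_ (mul_nonneg (sq_nonneg _) hA'nonneg) (by linarith)
    apply mul_le_mul hsq hAB hA'nonneg (by positivity)
  have step2 : (z + 1) * ((1/9) * (z + 2 ^ k) ^ 2 * B')
      ≤ 1 / 2 * ((z + 1) * ((z + 2 ^ k) ^ 2 * B')) := by
    have hfac : 0 ≤ (z + 1) * ((z + 2 ^ k) ^ 2 * B') := by positivity
    nlinarith [hfac]
  linarith
end

section
/- Let m ≥ 1 and k ≥ 1 be natural numbers, and let h be an odd natural number with 2^h ≥ 2k + 1. For every real number z with 1 ≤ z ≤ 2^m, the denominator P_m(−z)^h + P_m(z)^h is nonzero and the value S_{m,h}(z) = (P_m(−z)^h − P_m(z)^h)/(P_m(−z)^h + P_m(z)^h) satisfies 1 ≤ S_{m,h}(z) < 1 + 1/k. Moreover, for every real number z with −2^m ≤ z ≤ −1, the denominator is nonzero and −1 − 1/k < S_{m,h}(z) ≤ −1. -/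
open Polynomial

/-- `S_{m,h}(z) = (P_m(-z)^h - P_m(z)^h) / (P_m(-z)^h + P_m(z)^h)`. -/
noncomputable def S (m h : ℕ) (z : ℝ) : ℝ :=
  ((Polynomial.aeval (-z) (Pm m)) ^ h - (Polynomial.aeval z (Pm m)) ^ h) /
    ((Polynomial.aeval (-z) (Pm m)) ^ h + (Polynomial.aeval z (Pm m)) ^ h)

lemma aeval_Pm (m : ℕ) (z : ℝ) :
    aeval z (Pm m) = (z - 1) * ∏ i ∈ Finset.Icc 1 m, (z - 2 ^ i) ^ 2 := by
  simp only [Pm, map_mul, map_prod, map_pow, map_sub, aeval_X, aeval_one, map_ofNat, aeval_C]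

lemma aeval_Pm_neg (m : ℕ) (z : ℝ) :
    aeval (-z) (Pm m) = -((z + 1) * ∏ i ∈ Finset.Icc 1 m, (z + 2 ^ i) ^ 2) := by
  rw [aeval_Pm]
  rw [Finset.prod_congr rfl (fun i _ => by ring : ∀ i ∈ Finset.Icc 1 m,
    (-z - 2 ^ i) ^ 2 = ((z + 2 ^ i) ^ 2 : ℝ))]
  ring

lemma exists_good (m : ℕ) (z : ℝ) (hz1 : 1 ≤ z) :
    1 ≤ m → z ≤ 2 ^ m → ∃ i, 1 ≤ i ∧ i ≤ m ∧ (2:ℝ) ^ i ≤ 3 * z ∧ z ≤ 3 * 2 ^ i := by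
  induction m with
  | zero => intro h; omega
  | succ n ih =>
    intro _ hz2
    by_cases hn : n = 0
    · subst hn
      exact ⟨1, le_refl _, le_refl _, by norm_num; linarith, by norm_num at hz2 ⊢; linarith⟩
    · by_cases hzn : z ≤ 2 ^ n
      · obtain ⟨i, h1, h2, h3, h4⟩ := ih (by omega) hzn
        exact ⟨i, h1, Nat.le_succ_of_le h2, h3, h4⟩
      · push_neg at hzn
        have hp : (0:ℝ) < 2 ^ n := by positivity
        refine ⟨n + 1, by omega, le_refl _, ?_, ?_⟩
        · rw [pow_succ]; nlinarith
        · nlinarith [pow_pos (by norm_num : (0:ℝ) < 2) (n+1)]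

/-- Main positive-side lemma. -/
lemma key_pos (m k h : ℕ) (hm : 1 ≤ m) (hk : 1 ≤ k)
    (hodd : Odd h) (hh : 2 * k + 1 ≤ 2 ^ h)
    (z : ℝ) (hz1 : 1 ≤ z) (hz2 : z ≤ 2 ^ m) :
    (Polynomial.aeval (-z) (Pm m)) ^ h + (Polynomial.aeval z (Pm m)) ^ h ≠ 0 ∧
      1 ≤ S m h z ∧ S m h z < 1 + 1 / (k : ℝ) := by
  have hhne : h ≠ 0 := by rintro rfl; exact (Nat.not_odd_iff_even.mpr Even.zero) hodd
  set a : ℝ := (z + 1) * ∏ i ∈ Finset.Icc 1 m, (z + 2 ^ i) ^ 2 with ha_def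
  set b : ℝ := (z - 1) * ∏ i ∈ Finset.Icc 1 m, (z - 2 ^ i) ^ 2 with hb_def
  have hbval : aeval z (Pm m) = b := aeval_Pm m z
  have haval : aeval (-z) (Pm m) = -a := aeval_Pm_neg m z
  have hb0 : 0 ≤ b := by
    apply mul_nonneg (by linarith)
    exact Finset.prod_nonneg fun i _ => sq_nonneg _
  have ha0 : 0 < a := by
    apply mul_pos (by linarith)
    apply Finset.prod_pos
    intro i _
    have : (0:ℝ) < 2 ^ i := by positivity
    nlinarith
  -- 4 * b ≤ a
  have h4b : 4 * b ≤ a := by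
    obtain ⟨i₀, hi1, hi2, hle1, hle2⟩ := exists_good m z hz1 hm hz2
    have hmem : i₀ ∈ Finset.Icc 1 m := Finset.mem_Icc.mpr ⟨hi1, hi2⟩
    rw [hb_def, ha_def, ← Finset.mul_prod_erase _ _ hmem, ← Finset.mul_prod_erase _ _ hmem]
    have hpe : ∏ i ∈ (Finset.Icc 1 m).erase i₀, (z - 2 ^ i) ^ 2 ≤
        ∏ i ∈ (Finset.Icc 1 m).erase i₀, (z + 2 ^ i) ^ 2 := by
      apply Finset.prod_le_prod (fun i _ => sq_nonneg _)
      intro i _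
      have : (0:ℝ) < 2 ^ i := by positivity
      nlinarith
    have hpe0 : 0 ≤ ∏ i ∈ (Finset.Icc 1 m).erase i₀, (z - 2 ^ i) ^ 2 :=
      Finset.prod_nonneg fun i _ => sq_nonneg _
    have hsq : 4 * (z - 2 ^ i₀) ^ 2 ≤ (z + 2 ^ i₀) ^ 2 := by nlinarith
    have hz10 : (0:ℝ) ≤ z - 1 := by linarith
    calc 4 * ((z - 1) * ((z - 2 ^ i₀) ^ 2 * ∏ i ∈ (Finset.Icc 1 m).erase i₀, (z - 2 ^ i) ^ 2))
        = (z - 1) * ((4 * (z - 2 ^ i₀) ^ 2) * ∏ i ∈ (Finset.Icc 1 m).erase i₀, (z - 2 ^ i) ^ 2) := by ring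
      _ ≤ (z + 1) * ((z + 2 ^ i₀) ^ 2 * ∏ i ∈ (Finset.Icc 1 m).erase i₀, (z + 2 ^ i) ^ 2) := by
          apply mul_le_mul (by linarith)
            (mul_le_mul hsq hpe hpe0 (by nlinarith [sq_nonneg (z + 2 ^ i₀)]))
            (mul_nonneg (by positivity) hpe0) (by linarith)
  have hba : b < a := by linarith
  have hpowlt : b ^ h < a ^ h := pow_lt_pow_left₀ hba hb0 hhne
  have hpowb0 : 0 ≤ b ^ h := pow_nonneg hb0 h
  have hpowa0 : 0 < a ^ h := pow_pos ha0 h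
  -- key: (2k+1) b^h < a^h
  have hkey : (2 * (k:ℝ) + 1) * b ^ h < a ^ h := by
    rcases eq_or_lt_of_le hb0 with hb | hb
    · rw [← hb]
      simp [zero_pow hhne, hpowa0]
    · have h2b : 2 * b < a := by linarith
      have : (2 * b) ^ h < a ^ h := pow_lt_pow_left₀ h2b (by linarith) hhne
      have h2k : (2 * (k:ℝ) + 1) ≤ 2 ^ h := by exact_mod_cast hh
      calc (2 * (k:ℝ) + 1) * b ^ h ≤ 2 ^ h * b ^ h := by
            apply mul_le_mul_of_nonneg_right h2k (pow_nonneg (le_of_lt hb) h)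
        _ = (2 * b) ^ h := (mul_pow 2 b h).symm
        _ < a ^ h := this
  -- denominator
  have hnegpow : (-a) ^ h = -(a ^ h) := Odd.neg_pow hodd a
  have hden : aeval (-z) (Pm m) ^ h + aeval z (Pm m) ^ h = b ^ h - a ^ h := by
    rw [haval, hbval, hnegpow]; ring
  have hdenneg : b ^ h - a ^ h < 0 := by linarith
  have hdne : aeval (-z) (Pm m) ^ h + aeval z (Pm m) ^ h ≠ 0 := by
    rw [hden]; exact ne_of_lt hdenneg
  refine ⟨hdne, ?_, ?_⟩
  · have hS : S m h z = (a ^ h + b ^ h) / (a ^ h - b ^ h) := by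
      rw [S, haval, hbval, hnegpow]
      rw [show -(a^h) - b^h = -(a^h + b^h) by ring, show -(a^h) + b^h = -(a^h - b^h) by ring,
        neg_div_neg_eq]
    rw [hS]
    rw [le_div_iff₀ (by linarith)]
    linarith
  · have hS : S m h z = (a ^ h + b ^ h) / (a ^ h - b ^ h) := by
      rw [S, haval, hbval, hnegpow]
      rw [show -(a^h) - b^h = -(a^h + b^h) by ring, show -(a^h) + b^h = -(a^h - b^h) by ring,
        neg_div_neg_eq]
    rw [hS, div_lt_iff₀ (by linarith)]
    have hk0 : (0:ℝ) < k := by exact_mod_cast hk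
    have h1k : 1 / (k:ℝ) * k = 1 := by field_simp
    nlinarith [mul_lt_mul_of_pos_left hkey (by positivity : (0:ℝ) < 1 / (k:ℝ))]

theorem S_bounds (m k h : ℕ) (hm : 1 ≤ m) (hk : 1 ≤ k)
    (hodd : Odd h) (hh : 2 * k + 1 ≤ 2 ^ h) :
    (∀ z : ℝ, 1 ≤ z → z ≤ 2 ^ m →
      (Polynomial.aeval (-z) (Pm m)) ^ h + (Polynomial.aeval z (Pm m)) ^ h ≠ 0 ∧
      1 ≤ S m h z ∧ S m h z < 1 + 1 / (k : ℝ)) ∧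
    (∀ z : ℝ, -(2 ^ m) ≤ z → z ≤ -1 →
      (Polynomial.aeval (-z) (Pm m)) ^ h + (Polynomial.aeval z (Pm m)) ^ h ≠ 0 ∧
      -1 - 1 / (k : ℝ) < S m h z ∧ S m h z ≤ -1) := by
  constructor
  · intro z hz1 hz2
    exact key_pos m k h hm hk hodd hh z hz1 hz2
  · intro z hz1 hz2
    set w : ℝ := -z with hw
    have hw1 : 1 ≤ w := by simp [hw]; linarith
    have hw2 : w ≤ 2 ^ m := by simp [hw]; linarith
    obtain ⟨hdne, hS1, hS2⟩ := key_pos m k h hm hk hodd hh w hw1 hw2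
    have hzw : z = -w := by simp [hw]
    have hdeq : aeval (-z) (Pm m) ^ h + aeval z (Pm m) ^ h =
        aeval (-w) (Pm m) ^ h + aeval w (Pm m) ^ h := by
      rw [hzw, neg_neg]; ring
    have hSeq : S m h z = -(S m h w) := by
      rw [S, S, hzw, neg_neg, ← neg_div, neg_sub, add_comm ((aeval (-w)) (Pm m) ^ h)]
    refine ⟨by rw [hdeq]; exact hdne, ?_, ?_⟩
    · rw [hSeq]; linarith
    · rw [hSeq]; linarith
end

section
/- Let m ≥ 1 and k ≥ 1 be natural numbers, and let h be an odd natural number with 2^h ≥ 4k + 1. Let z : Fin k → ℝ satisfy 1 ≤ |z i| ≤ 2^m for every i, and define T = 1 + 2·∑_{i} S_{m,h}(z i). If at least half of the z i are positive (i.e. 2·#{i : z i > 0} ≥ k), then T > 0; otherwise T < 0. -/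
open Polynomial
lemma exists_near (z : ℝ) (h1 : 1 ≤ z) :
    ∀ m, 1 ≤ m → z ≤ 2 ^ m → ∃ j, 1 ≤ j ∧ j ≤ m ∧ (2:ℝ) ^ (j-1) ≤ z ∧ z ≤ 2 ^ j := by
  intro m
  induction m with
  | zero => intro h; simp at h
  | succ n ih =>
    intro _ h2
    by_cases hn : z ≤ 2 ^ n
    · rcases Nat.eq_zero_or_pos n with rfl | hn1
      · exact ⟨1, le_refl 1, le_refl 1, by simpa using h1, h2⟩
      · obtain ⟨j, hj1, hj2, hj3, hj4⟩ := ih hn1 hn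
        exact ⟨j, hj1, by omega, hj3, hj4⟩
    · exact ⟨n+1, by omega, le_refl _, by simpa using (not_le.mp hn).le, h2⟩

lemma three_b_le_a (m : ℕ) (hm : 1 ≤ m) (z : ℝ) (h1 : 1 ≤ z) (h2 : z ≤ 2 ^ m) :
    3 * ((z - 1) * ∏ i ∈ Finset.Icc 1 m, (z - 2 ^ i) ^ 2)
      ≤ (z + 1) * ∏ i ∈ Finset.Icc 1 m, (z + 2 ^ i) ^ 2 := by
  obtain ⟨j, hj1, hj2, hj3, hj4⟩ := exists_near z h1 m hm h2
  have hjmem : j ∈ Finset.Icc 1 m := Finset.mem_Icc.mpr ⟨hj1, hj2⟩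
  rw [← Finset.mul_prod_erase _ _ hjmem, ← Finset.mul_prod_erase _ (fun i => (z + 2^i)^2) hjmem]
  have hpow : (2:ℝ) * 2 ^ (j-1) = 2 ^ j := by
    rw [← pow_succ']
    congr 1
    omega
  have key : 3 * (z - 2 ^ j) ^ 2 ≤ (z + 2 ^ j) ^ 2 := by nlinarith [hj3, hj4, hpow]
  have hprod : ∏ i ∈ (Finset.Icc 1 m).erase j, (z - 2 ^ i) ^ 2
      ≤ ∏ i ∈ (Finset.Icc 1 m).erase j, (z + 2 ^ i) ^ 2 := by
    apply Finset.prod_le_prod (fun i _ => sq_nonneg _)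
    intro i _
    have : (0:ℝ) < 2 ^ i := by positivity
    nlinarith
  have hprodnn : (0:ℝ) ≤ ∏ i ∈ (Finset.Icc 1 m).erase j, (z - 2 ^ i) ^ 2 :=
    Finset.prod_nonneg (fun i _ => sq_nonneg _)
  calc 3 * ((z - 1) * ((z - 2 ^ j) ^ 2 * ∏ i ∈ (Finset.Icc 1 m).erase j, (z - 2 ^ i) ^ 2))
      = ((z - 1) * (3 * (z - 2 ^ j) ^ 2)) * ∏ i ∈ (Finset.Icc 1 m).erase j, (z - 2 ^ i) ^ 2 := by
        ring
    _ ≤ ((z + 1) * (z + 2 ^ j) ^ 2) * ∏ i ∈ (Finset.Icc 1 m).erase j, (z + 2 ^ i) ^ 2 := by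
        apply mul_le_mul _ hprod hprodnn (by positivity)
        apply mul_le_mul (by linarith) key (by positivity) (by linarith)
    _ = (z + 1) * ((z + 2 ^ j) ^ 2 * ∏ i ∈ (Finset.Icc 1 m).erase j, (z + 2 ^ i) ^ 2) := by
        ring

lemma nat_pow_ineq : ∀ h : ℕ, 1 ≤ h → 3 * 2 ^ h ≤ 2 * 3 ^ h := by
  intro h
  induction h with
  | zero => omega
  | succ n ih =>
    intro _
    rcases Nat.eq_zero_or_pos n with rfl | hn
    · norm_num
    · have := ih hn
      have h2 : (0:ℕ) < 2 ^ n := Nat.pow_pos (by norm_num)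
      calc 3 * 2 ^ (n+1) = 2 * (3 * 2 ^ n) := by ring
        _ ≤ 2 * (2 * 3 ^ n) := by omega
        _ ≤ 2 * 3 ^ (n+1) := by ring_nf; omega

lemma S_neg (m h : ℕ) (z : ℝ) : S m h (-z) = - S m h z := by
  simp only [S, neg_neg, ← neg_div, neg_sub]
  rw [add_comm]

lemma S_bound (m hn k : ℕ) (hm : 1 ≤ m) (hk : 1 ≤ k) (hodd : Odd hn)
    (hh : 4 * k + 1 ≤ 2 ^ hn) (z : ℝ) (h1 : 1 ≤ z) (h2 : z ≤ 2 ^ m) :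
    1 ≤ S m hn z ∧ S m hn z ≤ 1 + 2 / (4 * k + 1) := by
  have hh1 : 1 ≤ hn := hodd.pos
  set a : ℝ := (z + 1) * ∏ i ∈ Finset.Icc 1 m, (z + 2 ^ i) ^ 2 with ha_def
  set b : ℝ := (z - 1) * ∏ i ∈ Finset.Icc 1 m, (z - 2 ^ i) ^ 2 with hb_def
  have ha : 0 < a := by
    apply mul_pos (by linarith)
    apply Finset.prod_pos
    intro i _
    have : (0:ℝ) < 2 ^ i := by positivity
    positivity
  have hb : 0 ≤ b := by
    apply mul_nonneg (by linarith)
    exact Finset.prod_nonneg fun i _ => sq_nonneg _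
  have hab : 3 * b ≤ a := three_b_le_a m hm z h1 h2
  have hba : b < a := by linarith
  have hS : S m hn z = (a ^ hn + b ^ hn) / (a ^ hn - b ^ hn) := by
    rw [S, aeval_Pm_neg, aeval_Pm, ← ha_def, ← hb_def, hodd.neg_pow,
      show -a ^ hn - b ^ hn = -(a ^ hn + b ^ hn) by ring,
      show -a ^ hn + b ^ hn = -(a ^ hn - b ^ hn) by ring, neg_div_neg_eq]
  have hpow : b ^ hn < a ^ hn := pow_lt_pow_left₀ hba hb (by omega)
  have hbh : (0:ℝ) ≤ b ^ hn := pow_nonneg hb hn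
  have hden : 0 < a ^ hn - b ^ hn := by linarith
  have hk1 : (0:ℝ) < 4 * (k:ℝ) + 1 := by positivity
  set ε : ℝ := 2 / (4 * (k:ℝ) + 1) with hε_def
  have hε0 : 0 < ε := by positivity
  have hε1 : ε * (4 * (k:ℝ) + 1) = 2 := div_mul_cancel₀ 2 (by positivity)
  constructor
  · rw [hS, le_div_iff₀ hden]
    linarith
  · have h3 : (3 * b) ^ hn ≤ a ^ hn := pow_le_pow_left₀ (by positivity) hab hn
    have h3' : (3:ℝ) ^ hn * b ^ hn ≤ a ^ hn := by rw [← mul_pow]; exact h3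
    have hnat : (4 * (k:ℝ) + 2) ≤ 3 ^ hn := by
      have := nat_pow_ineq hn hh1
      have h4 : 2 * (4 * k + 2) ≤ 2 * 3 ^ hn := by
        calc 2 * (4 * k + 2) ≤ 3 * (4 * k + 1) := by omega
          _ ≤ 3 * 2 ^ hn := by omega
          _ ≤ 2 * 3 ^ hn := this
      have h5 : 4 * k + 2 ≤ 3 ^ hn := by omega
      exact_mod_cast h5
    have key2 : (2 + ε) * b ^ hn ≤ ε * a ^ hn := by
      have e1 : ε * ((3:ℝ) ^ hn * b ^ hn) ≤ ε * a ^ hn :=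
        mul_le_mul_of_nonneg_left h3' hε0.le
      have e2 : (4 * (k:ℝ) + 2) * b ^ hn ≤ (3:ℝ) ^ hn * b ^ hn :=
        mul_le_mul_of_nonneg_right hnat hbh
      have e3 : ε * ((4 * (k:ℝ) + 2) * b ^ hn) ≤ ε * ((3:ℝ) ^ hn * b ^ hn) :=
        mul_le_mul_of_nonneg_left e2 hε0.le
      have e4 : ε * ((4 * (k:ℝ) + 2) * b ^ hn) = (2 + ε) * b ^ hn := by
        linear_combination (b ^ hn) * hε1
      linarith
    rw [hS, div_le_iff₀ hden]
    nlinarith [key2]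

lemma S_bound_neg (m hn k : ℕ) (hm : 1 ≤ m) (hk : 1 ≤ k) (hodd : Odd hn)
    (hh : 4 * k + 1 ≤ 2 ^ hn) (z : ℝ) (h1 : z ≤ -1) (h2 : -(2 ^ m) ≤ z) :
    -(1 + 2 / (4 * k + 1)) ≤ S m hn z ∧ S m hn z ≤ -1 := by
  obtain ⟨hb1, hb2⟩ := S_bound m hn k hm hk hodd hh (-z) (by linarith) (by linarith)
  have : S m hn z = - S m hn (-z) := by
    rw [show z = -(-z) by ring, S_neg, neg_neg]
  rw [this]
  constructor <;> linarith

theorem T_sign (m k h : ℕ) (hm : 1 ≤ m) (hk : 1 ≤ k)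
    (hodd : Odd h) (hh : 4 * k + 1 ≤ 2 ^ h)
    (z : Fin k → ℝ) (hz : ∀ i, 1 ≤ |z i| ∧ |z i| ≤ 2 ^ m) :
    (k ≤ 2 * Nat.card {i : Fin k // 0 < z i} →
      0 < 1 + 2 * ∑ i, S m h (z i)) ∧
    (¬ k ≤ 2 * Nat.card {i : Fin k // 0 < z i} →
      1 + 2 * ∑ i, S m h (z i) < 0) := by
  classical
  set ε : ℝ := 2 / (4 * (k:ℝ) + 1) with hε_def
  have hε0 : 0 < ε := by positivity
  set P : Finset (Fin k) := Finset.univ.filter (fun i => 0 < z i) with hP_def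
  set N : Finset (Fin k) := Finset.univ.filter (fun i => ¬ 0 < z i) with hN_def
  have hcard : Nat.card {i : Fin k // 0 < z i} = P.card := by
    rw [Nat.card_eq_fintype_card, Fintype.card_subtype]
  have hpq : P.card + N.card = k := by
    rw [hP_def, hN_def]
    rw [Finset.card_filter_add_card_filter_not]
    simp
  have hsplit : ∑ i, S m h (z i) = ∑ i ∈ P, S m h (z i) + ∑ i ∈ N, S m h (z i) :=
    (Finset.sum_filter_add_sum_filter_not _ _ _).symm
  have hPb : ∀ i ∈ P, 1 ≤ S m h (z i) ∧ S m h (z i) ≤ 1 + ε := by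
    intro i hi
    have hpos : 0 < z i := (Finset.mem_filter.mp hi).2
    obtain ⟨ha1, ha2⟩ := hz i
    rw [abs_of_pos hpos] at ha1 ha2
    exact S_bound m h k hm hk hodd hh (z i) ha1 ha2
  have hNb : ∀ i ∈ N, -(1 + ε) ≤ S m h (z i) ∧ S m h (z i) ≤ -1 := by
    intro i hi
    have hneg : ¬ 0 < z i := (Finset.mem_filter.mp hi).2
    obtain ⟨ha1, ha2⟩ := hz i
    rw [abs_of_nonpos (not_lt.mp hneg)] at ha1 ha2
    exact S_bound_neg m h k hm hk hodd hh (z i) (by linarith) (by linarith)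
  have hP1 : (P.card : ℝ) * 1 ≤ ∑ i ∈ P, S m h (z i) := by
    rw [mul_one]
    calc (P.card : ℝ) = ∑ _i ∈ P, (1:ℝ) := by simp
      _ ≤ _ := Finset.sum_le_sum (fun i hi => (hPb i hi).1)
  have hP2 : ∑ i ∈ P, S m h (z i) ≤ (P.card : ℝ) * (1 + ε) := by
    calc ∑ i ∈ P, S m h (z i) ≤ ∑ _i ∈ P, (1 + ε) :=
          Finset.sum_le_sum (fun i hi => (hPb i hi).2)
      _ = (P.card : ℝ) * (1 + ε) := by rw [Finset.sum_const, nsmul_eq_mul]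
  have hN1 : (N.card : ℝ) * (-(1 + ε)) ≤ ∑ i ∈ N, S m h (z i) := by
    calc (N.card : ℝ) * (-(1 + ε)) = ∑ _i ∈ N, (-(1 + ε)) := by
          rw [Finset.sum_const, nsmul_eq_mul]
      _ ≤ _ := Finset.sum_le_sum (fun i hi => (hNb i hi).1)
  have hN2 : ∑ i ∈ N, S m h (z i) ≤ (N.card : ℝ) * (-1) := by
    calc ∑ i ∈ N, S m h (z i) ≤ ∑ _i ∈ N, (-1 : ℝ) :=
          Finset.sum_le_sum (fun i hi => (hNb i hi).2)
      _ = (N.card : ℝ) * (-1) := by rw [Finset.sum_const, nsmul_eq_mul]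
  have hkε : (k : ℝ) * ε * 2 < 1 := by
    rw [hε_def, ← mul_div_assoc, div_mul_eq_mul_div, div_lt_one (by positivity)]
    linarith
  have hqk : (N.card : ℝ) ≤ k := by
    have : N.card ≤ k := by omega
    exact_mod_cast this
  have hpk : (P.card : ℝ) ≤ k := by
    have : P.card ≤ k := by omega
    exact_mod_cast this
  have hqε : (N.card : ℝ) * ε ≤ (k : ℝ) * ε := mul_le_mul_of_nonneg_right hqk hε0.le
  have hpε : (P.card : ℝ) * ε ≤ (k : ℝ) * ε := mul_le_mul_of_nonneg_right hpk hε0.le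
  have hpqR : (P.card : ℝ) + N.card = k := by exact_mod_cast hpq
  constructor
  · intro hhalf
    rw [hcard] at hhalf
    have hhalfR : (k : ℝ) ≤ 2 * P.card := by exact_mod_cast hhalf
    rw [hsplit]
    nlinarith [hP1, hN1, hqε, hkε, hpqR, hhalfR]
  · intro hhalf
    rw [hcard] at hhalf
    have hhalfR : 2 * (P.card : ℝ) + 1 ≤ k := by
      have : 2 * P.card + 1 ≤ k := by omega
      exact_mod_cast this
    rw [hsplit]
    nlinarith [hP2, hN2, hpε, hkε, hpqR, hhalfR]
end

section
/- Let (Ω, μ) be a probability space, let t be an odd natural number, let ε be a real number with 0 < ε ≤ 1/2, and let X : Fin t → Ω → ℝ be a family of independent random variables such that each X i takes only the values 0 and 1 and μ{ω : X i ω = 1} = 1/2 + ε for every i. Then the probability that ∑_{i} X i ω ≥ t/2 is at least 1 − (1/2)·(1 − 4ε²)^{t/2}, where the exponent t/2 is taken as a real power. -/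
open MeasureTheory ProbabilityTheory Finset


open MeasureTheory ProbabilityTheory Finset

-- counting lemma
lemma count_aux (n : ℕ) :
    ((Finset.univ : Finset (Finset (Fin (2*n+1)))).filter (fun S => S.card ≤ n)).card
      ≤ 2 ^ (2*n) := by
  classical
  set A := (Finset.univ : Finset (Finset (Fin (2*n+1)))).filter (fun S => S.card ≤ n) with hA
  set B := (Finset.univ : Finset (Finset (Fin (2*n+1)))).filter (fun S => ¬ S.card ≤ n) with hB
  have hAB : A.card + B.card = 2 ^ (2*n+1) := by
    rw [hA, hB, Finset.card_filter_add_card_filter_not]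
    simp [Finset.card_univ]
  have hinj : ∀ S ∈ A, Sᶜ ∈ B := by
    intro S hS
    simp only [hA, Finset.mem_filter, Finset.mem_univ, true_and] at hS
    simp only [hB, Finset.mem_filter, Finset.mem_univ, true_and, not_le]
    rw [Finset.card_compl]
    simp only [Fintype.card_fin]
    omega
  have hle : A.card ≤ B.card := by
    apply Finset.card_le_card_of_injOn (fun S => Sᶜ) hinj
    intro a _ b _ hab
    simpa using congrArg (·ᶜ) hab
  omega

-- real-number per-term inequality
lemma term_aux {p q : ℝ} (hq : 0 ≤ q) (hqp : q ≤ p) (n k : ℕ) (hk : k ≤ n) :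
    p ^ k * q ^ (2*n+1-k) ≤ (p*q) ^ (((2*n+1 : ℕ) : ℝ)/2) := by
  have hp : 0 ≤ p := hq.trans hqp
  rcases eq_or_lt_of_le hq with h0 | h0
  · have hz : q ^ (2*n+1-k) = 0 := by rw [← h0]; exact zero_pow (by omega)
    rw [hz, mul_zero]
    exact Real.rpow_nonneg (mul_nonneg hp hq) _
  · have hp0 : 0 < p := lt_of_lt_of_le h0 hqp
    set T : ℝ := ((2*n+1 : ℕ) : ℝ) with hT
    have hTk : ((2*n+1-k : ℕ) : ℝ) = T - k := by
      rw [hT]; push_cast [Nat.cast_sub (by omega : k ≤ 2*n+1)]; ring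
    have hc : (0:ℝ) ≤ T/2 - k := by
      rw [hT]; push_cast; have : (k:ℝ) ≤ n := by exact_mod_cast hk
      linarith
    have key : q ^ (T/2 - (k:ℝ)) ≤ p ^ (T/2 - (k:ℝ)) :=
      Real.rpow_le_rpow hq hqp hc
    have e1 : p ^ k * q ^ (2*n+1-k) = p ^ (k:ℝ) * q ^ (T - (k:ℝ)) := by
      rw [← Real.rpow_natCast p k, ← Real.rpow_natCast q (2*n+1-k), hTk]
    rw [e1, Real.mul_rpow hp hq]
    have e2 : q ^ (T - (k:ℝ)) = q ^ (T/2) * q ^ (T/2 - (k:ℝ)) := by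
      rw [← Real.rpow_add h0]; ring_nf
    have e3 : p ^ (T/2) = p ^ (k:ℝ) * p ^ (T/2 - (k:ℝ)) := by
      rw [← Real.rpow_add hp0]; ring_nf
    rw [e2, e3]
    calc p ^ (k:ℝ) * (q ^ (T/2) * q ^ (T/2 - (k:ℝ)))
        ≤ p ^ (k:ℝ) * (q ^ (T/2) * p ^ (T/2 - (k:ℝ))) := by
          apply mul_le_mul_of_nonneg_left _ (Real.rpow_nonneg hp _)
          exact mul_le_mul_of_nonneg_left key (Real.rpow_nonneg hq _)
      _ = p ^ (k:ℝ) * p ^ (T/2 - (k:ℝ)) * q ^ (T/2) := by ring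

theorem chernoff_like_majority
    {Ω : Type*} [MeasurableSpace Ω] (μ : Measure Ω) [IsProbabilityMeasure μ]
    (t : ℕ) (ht : Odd t) (ε : ℝ) (hε0 : 0 < ε) (hε : ε ≤ 1 / 2)
    (X : Fin t → Ω → ℝ) (hmeas : ∀ i, Measurable (X i))
    (hindep : iIndepFun X μ)
    (hval : ∀ i ω, X i ω = 0 ∨ X i ω = 1)
    (hp : ∀ i, μ {ω | X i ω = 1} = ENNReal.ofReal (1 / 2 + ε)) :
    ENNReal.ofReal (1 - (1 / 2) * (1 - 4 * ε ^ 2) ^ ((t : ℝ) / 2)) ≤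
      μ {ω | (t : ℝ) / 2 ≤ ∑ i, X i ω} := by
  classical
  obtain ⟨n, hn⟩ := ht
  subst hn
  set p : ℝ := 1/2 + ε with hpdef
  set q : ℝ := 1/2 - ε with hqdef
  have hq0 : 0 ≤ q := by rw [hqdef]; linarith
  have hqp : q ≤ p := by rw [hqdef, hpdef]; linarith
  have hp0 : 0 ≤ p := hq0.trans hqp
  have h4 : 0 ≤ 1 - 4*ε^2 := by nlinarith
  have hm1 : ∀ i : Fin (2*n+1), MeasurableSet {ω | X i ω = 1} :=
    fun i => (hmeas i) (measurableSet_singleton 1)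
  have hqmeas : ∀ i, μ {ω | X i ω = 0} = ENNReal.ofReal q := by
    intro i
    have hset : {ω | X i ω = 0} = {ω | X i ω = 1}ᶜ := by
      ext ω
      simp only [Set.mem_setOf_eq, Set.mem_compl_iff]
      constructor
      · intro h h1; rw [h] at h1; norm_num at h1
      · intro h; rcases hval i ω with h0 | h1
        · exact h0
        · exact absurd h1 h
    rw [hset, measure_compl (hm1 i) (measure_ne_top _ _), measure_univ, hp i,
      ← ENNReal.ofReal_one, ← ENNReal.ofReal_sub _ (by positivity : (0:ℝ) ≤ 1/2 + ε)]
    congr 1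
    rw [hqdef]; ring
  have hatom : ∀ S : Finset (Fin (2*n+1)),
      μ (⋂ i ∈ (Finset.univ : Finset (Fin (2*n+1))),
          X i ⁻¹' {if i ∈ S then (1:ℝ) else 0})
        = ENNReal.ofReal (p ^ S.card * q ^ (2*n+1 - S.card)) := by
    intro S
    rw [hindep.measure_inter_preimage_eq_mul Finset.univ
      (fun i _ => measurableSet_singleton _)]
    have hterm : ∀ i : Fin (2*n+1), μ (X i ⁻¹' {if i ∈ S then (1:ℝ) else 0})
        = if i ∈ S then ENNReal.ofReal p else ENNReal.ofReal q := by
      intro i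
      by_cases hi : i ∈ S
      · simp only [hi, if_true]
        rw [show X i ⁻¹' {(1:ℝ)} = {ω | X i ω = 1} from rfl, hp i]
      · simp only [hi, if_false]
        rw [show X i ⁻¹' {(0:ℝ)} = {ω | X i ω = 0} from rfl, hqmeas i]
    rw [Finset.prod_congr rfl (fun i _ => hterm i), ← Finset.prod_mul_prod_compl S,
      Finset.prod_congr rfl (fun i hi => if_pos hi),
      Finset.prod_congr rfl (fun i hi => if_neg (Finset.mem_compl.mp hi)),
      Finset.prod_const, Finset.prod_const, Finset.card_compl, Fintype.card_fin,
      ← ENNReal.ofReal_pow hp0, ← ENNReal.ofReal_pow hq0,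
      ← ENNReal.ofReal_mul (by positivity)]
  set Bad := {ω | ∑ i, X i ω < ((2*n+1 : ℕ):ℝ)/2} with hBad
  have hBadMeas : MeasurableSet Bad :=
    measurableSet_lt (Finset.measurable_sum _ (fun i _ => hmeas i)) measurable_const
  set 𝒮 := (Finset.univ : Finset (Finset (Fin (2*n+1)))).filter (fun S => S.card ≤ n)
    with h𝒮
  have hsub : Bad ⊆ ⋃ S ∈ 𝒮, ⋂ i ∈ (Finset.univ : Finset (Fin (2*n+1))),
      X i ⁻¹' {if i ∈ S then (1:ℝ) else 0} := by
    intro ω hω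
    set S := Finset.univ.filter (fun i => X i ω = 1) with hS
    have hsum : ∑ i, X i ω = (S.card : ℝ) := by
      rw [hS, ← Finset.sum_boole]
      exact Finset.sum_congr rfl (fun i _ => by rcases hval i ω with h | h <;> simp [h])
    have hcard : S.card ≤ n := by
      rw [hBad, Set.mem_setOf_eq, hsum] at hω
      have h2 : ((2*S.card : ℕ):ℝ) < ((2*n+1:ℕ):ℝ) := by push_cast at hω ⊢; linarith
      have h3 : 2 * S.card < 2*n+1 := by exact_mod_cast h2
      omega
    have hmem : S ∈ 𝒮 := by rw [h𝒮]; simp [hcard]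
    refine Set.mem_biUnion hmem ?_
    simp only [Set.mem_iInter, Set.mem_preimage, Set.mem_singleton_iff]
    intro i _
    by_cases hi : i ∈ S
    · rw [if_pos hi]; exact (Finset.mem_filter.mp hi).2
    · rw [if_neg hi]
      rcases hval i ω with h | h
      · exact h
      · exact absurd (Finset.mem_filter.mpr ⟨Finset.mem_univ i, h⟩) hi
  have hbound : μ Bad ≤
      ENNReal.ofReal ((1/2) * (1 - 4*ε^2) ^ (((2*n+1:ℕ):ℝ)/2)) := by
    calc μ Bad ≤ μ (⋃ S ∈ 𝒮, ⋂ i ∈ (Finset.univ : Finset (Fin (2*n+1))),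
            X i ⁻¹' {if i ∈ S then (1:ℝ) else 0}) := measure_mono hsub
      _ ≤ ∑ S ∈ 𝒮, μ (⋂ i ∈ (Finset.univ : Finset (Fin (2*n+1))),
            X i ⁻¹' {if i ∈ S then (1:ℝ) else 0}) := measure_biUnion_finset_le _ _
      _ ≤ ∑ S ∈ 𝒮, ENNReal.ofReal ((p*q) ^ (((2*n+1:ℕ):ℝ)/2)) := by
          apply Finset.sum_le_sum
          intro S hSmem
          rw [hatom S]
          apply ENNReal.ofReal_le_ofReal
          have hk : S.card ≤ n := (Finset.mem_filter.mp hSmem).2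
          exact term_aux hq0 hqp n S.card hk
      _ = (𝒮.card : ENNReal) * ENNReal.ofReal ((p*q) ^ (((2*n+1:ℕ):ℝ)/2)) := by
          rw [Finset.sum_const, nsmul_eq_mul]
      _ ≤ ((2^(2*n) : ℕ) : ENNReal) * ENNReal.ofReal ((p*q) ^ (((2*n+1:ℕ):ℝ)/2)) :=
          mul_le_mul_left (Nat.cast_le.mpr (count_aux n)) _
      _ = ENNReal.ofReal (((2^(2*n):ℕ):ℝ) * (p*q) ^ (((2*n+1:ℕ):ℝ)/2)) := by
          rw [ENNReal.ofReal_mul (Nat.cast_nonneg _), ENNReal.ofReal_natCast]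
      _ = ENNReal.ofReal ((1/2) * (1 - 4*ε^2) ^ (((2*n+1:ℕ):ℝ)/2)) := by
          congr 1
          have hpq : p * q = (1 - 4*ε^2)/4 := by rw [hpdef, hqdef]; ring
          have h4T : (4:ℝ) ^ (((2*n+1:ℕ):ℝ)/2) = (2:ℝ)^(2*n+1) := by
            have h2 : (4:ℝ) = (2:ℝ) ^ (2:ℕ) := by norm_num
            rw [h2, ← Real.rpow_natCast (2:ℝ) 2, ← Real.rpow_mul (by norm_num),
              ← Real.rpow_natCast (2:ℝ) (2*n+1)]
            congr 1
            push_cast; ring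
          rw [hpq, Real.div_rpow h4 (by norm_num), h4T]
          rw [pow_succ]
          push_cast
          field_simp
          ring
  have hgood : {ω | ((2*n+1:ℕ):ℝ)/2 ≤ ∑ i, X i ω} = Badᶜ := by
    ext ω; simp [hBad, not_lt]
  rw [hgood, measure_compl hBadMeas (measure_ne_top _ _), measure_univ]
  have hb0 : 0 ≤ (1/2) * (1 - 4*ε^2) ^ (((2*n+1:ℕ):ℝ)/2) :=
    mul_nonneg (by norm_num) (Real.rpow_nonneg h4 _)
  calc ENNReal.ofReal (1 - (1/2) * (1 - 4*ε^2) ^ (((2*n+1:ℕ):ℝ)/2))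
      = 1 - ENNReal.ofReal ((1/2) * (1 - 4*ε^2) ^ (((2*n+1:ℕ):ℝ)/2)) := by
        rw [ENNReal.ofReal_sub _ hb0, ENNReal.ofReal_one]
    _ ≤ 1 - μ Bad := tsub_le_tsub_left hbound 1
end
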